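/- Define, for a finite binary sequence s of length n ≥ 1, e^s = the zero sequence if s ends in 0 (or s is empty), and e^s_i = 0 for i < n, e^s_{n+j} = (9/10^n)·(1/2^{j+1}) for j ≥ 0 if s ends in 1; and set d_s = ∑_{1 ≤ k ≤ lh(s)} e^{s|k}_{lh(s)}. Then for every x ∈ {0,1}^ℕ, ∑_{n=1}^∞ d_{x|n} = ∑_{k : x_k = 1} 9/10^k. -/

import Mathlib

/-- `d_{x|n}` for a binary sequence `x` (with coordinates indexed from 1):
`d_s = ∑_{1 ≤ k ≤ lh(s)} e^{s|k}_{lh(s)}`, where `e^{s|k}` is the zero sequence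
if `s_k = 0`, and `e^{s|k}_i = (9/10^k)·(1/2^{i-k+1})` for `i ≥ k` if `s_k = 1`. -/
noncomputable def dAddr (x : ℕ → Bool) (n : ℕ) : ℝ :=
  ∑ k ∈ Finset.Icc 1 n, (if x k then (9 / 10 ^ k : ℝ) * (1 / 2 ^ (n - k + 1)) else 0)

/-- For every `x ∈ {0,1}^ℕ`, `∑_{n=1}^∞ d_{x|n} = ∑_{k : x_k = 1} 9/10^k`
(all series converging). -/
theorem stmt8 (x : ℕ → Bool) :
    Summable (fun n : ℕ => dAddr x (n + 1)) ∧
    ∑' n : ℕ, dAddr x (n + 1)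
      = ∑' k : ℕ, (if x (k + 1) then (9 : ℝ) / 10 ^ (k + 1) else 0) := by
  classical
  set F : ℕ → ℕ → ℝ := fun k n =>
    if x (k + 1) ∧ k ≤ n then (9 / 10 ^ (k + 1) : ℝ) * (1 / 2 ^ (n - k + 1)) else 0 with hF
  have hFnonneg : ∀ k n, 0 ≤ F k n := by
    intro k n; simp only [hF]; split <;> positivity
  -- rewrite dAddr as a finite sum of F
  have hd : ∀ n, dAddr x (n + 1) = ∑ k ∈ Finset.range (n + 1), F k n := by
    intro n
    rw [dAddr, ← Finset.Ico_add_one_right_eq_Icc, Finset.sum_Ico_eq_sum_range]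
    have he : n + 1 + 1 - 1 = n + 1 := by omega
    rw [he]
    apply Finset.sum_congr rfl
    intro i hi
    have hin : i ≤ n := Nat.lt_succ_iff.mp (Finset.mem_range.mp hi)
    have h2 : n + 1 - (1 + i) + 1 = n - i + 1 := by omega
    simp only [hF, hin, and_true, Nat.add_comm 1 i, h2]
    rw [show n + 1 - (i + 1) = n - i by omega]
  -- F k n = 0 for n < k
  have hzero : ∀ k, ∀ n, n ∉ Set.range (fun j => k + j) → F k n = 0 := by
    intro k n hn
    have hkn : ¬ k ≤ n := by
      intro hle; exact hn ⟨n - k, by simp; omega⟩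
    simp [hF, hkn]
  have hsupp : ∀ k, Function.support (F k) ⊆ Set.range (fun j => k + j) := by
    intro k n hn
    by_contra h
    exact hn (hzero k n h)
  have hinj : ∀ k : ℕ, Function.Injective (fun j => k + j) := fun k a b h => by
    simpa using h
  -- geometric facts
  have hhalf : Summable (fun j : ℕ => ((1 : ℝ) / 2) ^ j) :=
    summable_geometric_of_lt_one (by norm_num) (by norm_num)
  have hhalfsum : ∑' j : ℕ, ((1 : ℝ) / 2) ^ j = 2 := by
    rw [tsum_geometric_of_lt_one (by norm_num) (by norm_num)]; norm_num
  -- the shifted function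
  have hshiftval : ∀ k j, F k (k + j) =
      (if x (k + 1) then ((9 / 10 ^ (k + 1) : ℝ) / 2) else 0) * ((1 : ℝ) / 2) ^ j := by
    intro k j
    have h1 : k ≤ k + j := Nat.le_add_right _ _
    have h2 : k + j - k + 1 = j + 1 := by omega
    by_cases hx : x (k + 1) <;> simp [hF, hx, h1, h2] <;> ring
  have hsumF : ∀ k, Summable (F k) := by
    intro k
    rw [← Function.Injective.summable_iff (hinj k) (hzero k)]
    have heq : (F k ∘ fun j => k + j) =
        fun j => (if x (k + 1) then ((9 / 10 ^ (k + 1) : ℝ) / 2) else 0) * ((1 : ℝ) / 2) ^ j := by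
      funext j; exact hshiftval k j
    rw [heq]
    exact hhalf.mul_left _
  have htsumF : ∀ k, ∑' n, F k n = (if x (k + 1) then (9 : ℝ) / 10 ^ (k + 1) else 0) := by
    intro k
    rw [← Function.Injective.tsum_eq (hinj k) (hsupp k)]
    have : (fun j => F k (k + j)) =
        fun j => (if x (k + 1) then ((9 / 10 ^ (k + 1) : ℝ) / 2) else 0) * ((1 : ℝ) / 2) ^ j := by
      funext j; exact hshiftval k j
    rw [this, tsum_mul_left, hhalfsum]
    by_cases hx : x (k + 1) <;> simp [hx] <;> ring
  -- summability of the column sums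
  have hcol : Summable (fun k : ℕ => (if x (k + 1) then (9 : ℝ) / 10 ^ (k + 1) else 0)) := by
    have hg : Summable (fun k : ℕ => ((9 : ℝ) / 10) * ((1 : ℝ) / 10) ^ k) :=
      (summable_geometric_of_lt_one (by norm_num) (by norm_num)).mul_left _
    apply Summable.of_nonneg_of_le _ _ hg
    · intro k; split <;> positivity
    · intro k
      have h : (9 : ℝ) / 10 ^ (k + 1) = 9 / 10 * (1 / 10) ^ k := by
        rw [pow_succ, one_div_pow]; field_simp
      split
      · rw [h]
      · positivity
  -- summability of the double sum
  have hfnn : ∀ p : ℕ × ℕ, 0 ≤ (fun p : ℕ × ℕ => F p.1 p.2) p := fun p => hFnonneg _ _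
  have hsum2 : Summable (fun p : ℕ × ℕ => F p.1 p.2) := by
    rw [summable_prod_of_nonneg hfnn]
    refine ⟨fun k => hsumF k, ?_⟩
    simpa only [htsumF] using hcol
  -- the swapped version
  have hsum2' : Summable (fun p : ℕ × ℕ => F p.2 p.1) := by
    have := (Equiv.prodComm ℕ ℕ).summable_iff.mpr hsum2
    exact this
  have hrow : Summable (fun n : ℕ => ∑' k, F k n) := by
    have := (summable_prod_of_nonneg (f := fun p : ℕ × ℕ => F p.2 p.1)
      (fun p => hFnonneg _ _)).mp hsum2'
    exact this.2
  -- rewrite dAddr x (n+1) as a tsum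
  have hd' : ∀ n, dAddr x (n + 1) = ∑' k, F k n := by
    intro n
    rw [hd n]
    exact (tsum_eq_sum (fun k hk => by
      have : ¬ k ≤ n := fun h => hk (Finset.mem_range.mpr (Nat.lt_succ_of_le h))
      simp [hF, this])).symm
  have hdfun : (fun n : ℕ => dAddr x (n + 1)) = fun n => ∑' k, F k n := funext hd'
  constructor
  · rw [hdfun]; exact hrow
  · rw [hdfun]
    have hrows : ∀ n, Summable (fun k => F k n) := by
      intro n
      apply summable_of_ne_finset_zero (s := Finset.range (n + 1))
      intro k hk
      have : ¬ k ≤ n := fun h => hk (Finset.mem_range.mpr (Nat.lt_succ_of_le h))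
      simp [hF, this]
    have h1 : ∑' n : ℕ, ∑' k, F k n = ∑' p : ℕ × ℕ, F p.2 p.1 :=
      (Summable.tsum_prod' hsum2' (fun n => hrows n)).symm
    have h2 : ∑' p : ℕ × ℕ, F p.2 p.1 = ∑' p : ℕ × ℕ, F p.1 p.2 := by
      rw [← (Equiv.prodComm ℕ ℕ).tsum_eq (fun p : ℕ × ℕ => F p.1 p.2)]
      rfl
    rw [h1, h2, Summable.tsum_prod' hsum2 (fun k => hsumF k)]
    exact tsum_congr htsumF
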